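/- Let M, M̂ ∈ ℝ^{m×m} be symmetric positive semidefinite matrices, suppose Mλ* = 0 for some λ* ∈ Δ^m, suppose α₂ > 0 satisfies vᵀMv ≥ α₂‖v‖² for every v ∈ ℝ^m orthogonal to λ*, and suppose |M_{ij} − M̂_{ij}| ≤ Q for all 1 ≤ i,j ≤ m. If λ̂ ∈ Δ^m satisfies λ̂ᵀ M̂ λ̂ ≤ λᵀ M̂ λ for every λ ∈ Δ^m, then ‖λ̂ − λ*‖²₂ ≤ 8·m³·Q/α₂. -/

import Mathlib

open Matrix

private lemma quad_le_of_entries_le {m : ℕ} (A : Matrix (Fin m) (Fin m) ℝ) (Q : ℝ)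
    (hA : ∀ i j, A i j ≤ Q) (x : Fin m → ℝ) (hx0 : ∀ i, 0 ≤ x i)
    (hx1 : ∑ i, x i = 1) : x ⬝ᵥ A.mulVec x ≤ Q := by
  have h1 : x ⬝ᵥ A.mulVec x = ∑ i, ∑ j, x i * (A i j * x j) := by
    simp [dotProduct, mulVec, Finset.mul_sum]
  rw [h1]
  calc ∑ i, ∑ j, x i * (A i j * x j) ≤ ∑ i, ∑ j, x i * (Q * x j) := by
        refine Finset.sum_le_sum fun i _ => Finset.sum_le_sum fun j _ => ?_
        exact mul_le_mul_of_nonneg_left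
          (mul_le_mul_of_nonneg_right (hA i j) (hx0 j)) (hx0 i)
    _ = Q * ((∑ i, x i) * (∑ j, x j)) := by
        rw [Finset.sum_mul_sum, Finset.mul_sum]
        refine Finset.sum_congr rfl fun i _ => ?_
        rw [Finset.mul_sum]
        exact Finset.sum_congr rfl fun j _ => by ring
    _ = Q := by rw [hx1]; ring

/-- Deterministic coefficient-recovery bound: if `M` is PSD with kernel spanned by
`λ* ∈ Δ^m` and spectral gap `α₂`, `M̂` is PSD with `|M_{ij} − M̂_{ij}| ≤ Q`, and
`λ̂` minimizes the quadratic form of `M̂` over the simplex, then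
`‖λ̂ − λ*‖² ≤ 8 m³ Q / α₂`. -/
theorem coefficient_recovery_bound
    {m : ℕ}
    (M Mhat : Matrix (Fin m) (Fin m) ℝ)
    (hMsymm : M.IsSymm) (hMpsd : M.PosSemidef)
    (hMhatSymm : Mhat.IsSymm) (hMhatPsd : Mhat.PosSemidef)
    (lamStar : Fin m → ℝ) (hstar0 : ∀ j, 0 ≤ lamStar j) (hstar1 : ∑ j, lamStar j = 1)
    (hker : M.mulVec lamStar = 0)
    (α₂ : ℝ) (hα : 0 < α₂)
    (hgap : ∀ v : Fin m → ℝ, v ⬝ᵥ lamStar = 0 →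
      α₂ * ∑ i, v i ^ 2 ≤ v ⬝ᵥ M.mulVec v)
    (Q : ℝ) (hQ : ∀ i j, |M i j - Mhat i j| ≤ Q)
    (lamHat : Fin m → ℝ) (hhat0 : ∀ j, 0 ≤ lamHat j) (hhat1 : ∑ j, lamHat j = 1)
    (hmin : ∀ lam : Fin m → ℝ, (∀ j, 0 ≤ lam j) → ∑ j, lam j = 1 →
      lamHat ⬝ᵥ Mhat.mulVec lamHat ≤ lam ⬝ᵥ Mhat.mulVec lam) :
    ∑ i, (lamHat i - lamStar i) ^ 2 ≤ 8 * m ^ 3 * Q / α₂ := by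
  have hm : 0 < m := by
    rcases Nat.eq_zero_or_pos m with h | h
    · exfalso; subst h; simp at hstar1
    · exact h
  have hQ0 : 0 ≤ Q := le_trans (abs_nonneg _) (hQ ⟨0, hm⟩ ⟨0, hm⟩)
  -- symmetry of the bilinear form of M
  have hsym : ∀ x y : Fin m → ℝ, x ⬝ᵥ M.mulVec y = y ⬝ᵥ M.mulVec x := by
    intro x y
    rw [dotProduct_mulVec, ← mulVec_transpose, hMsymm.eq, dotProduct_comm]
  -- kernel facts
  have hker1 : ∀ x : Fin m → ℝ, x ⬝ᵥ M.mulVec lamStar = 0 := by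
    intro x; rw [hker, dotProduct_zero]
  have hker2 : ∀ x : Fin m → ℝ, lamStar ⬝ᵥ M.mulVec x = 0 := by
    intro x; rw [hsym]; exact hker1 x
  set v : Fin m → ℝ := fun i => lamHat i - lamStar i with hv
  have hsumv : ∑ i, v i = 0 := by
    simp [hv, Finset.sum_sub_distrib, hstar1, hhat1]
  have hs1 : ∑ i, lamStar i ^ 2 ≤ 1 := by
    calc ∑ i, lamStar i ^ 2 ≤ ∑ i, lamStar i * 1 := by
          refine Finset.sum_le_sum fun i _ => ?_
          have h1 : lamStar i ≤ 1 := by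
            have := Finset.single_le_sum (f := lamStar) (fun j _ => hstar0 j)
              (Finset.mem_univ i)
            linarith [hstar1]
          have := hstar0 i
          nlinarith
      _ = 1 := by simp [hstar1]
  set s : ℝ := ∑ i, lamStar i ^ 2 with hsdef
  have hs0 : 0 < s := by
    have : (1 : ℝ) = (∑ i, lamStar i) ^ 2 := by rw [hstar1]; ring
    have hcs := sq_sum_le_card_mul_sum_sq (s := Finset.univ) (f := lamStar)
    simp only [Finset.card_univ, Fintype.card_fin] at hcs
    rw [hstar1] at hcs
    have hmpos : (0 : ℝ) < m := by exact_mod_cast hm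
    nlinarith
  set t : ℝ := (v ⬝ᵥ lamStar) / s with htdef
  set w : Fin m → ℝ := fun i => v i - t * lamStar i with hw
  have hworth : w ⬝ᵥ lamStar = 0 := by
    have : w ⬝ᵥ lamStar = v ⬝ᵥ lamStar - t * s := by
      simp only [hw, dotProduct, hsdef, Finset.mul_sum]
      rw [← Finset.sum_sub_distrib]
      exact Finset.sum_congr rfl fun i _ => by ring
    rw [this, htdef]
    field_simp
    ring
  -- quadratic form identities
  have hwMw : w ⬝ᵥ M.mulVec w = lamHat ⬝ᵥ M.mulVec lamHat := by
    have hweq : w = fun i => lamHat i - (lamStar i + t * lamStar i) := by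
      funext i; simp [hw, hv]; ring
    have hexp : ∀ (a b : Fin m → ℝ),
        (fun i => a i - b i) ⬝ᵥ M.mulVec (fun i => a i - b i)
          = a ⬝ᵥ M.mulVec a - a ⬝ᵥ M.mulVec b - b ⬝ᵥ M.mulVec a + b ⬝ᵥ M.mulVec b := by
      intro a b
      have : (fun i => a i - b i) = a - b := rfl
      rw [this, mulVec_sub, dotProduct_sub, sub_dotProduct, sub_dotProduct]
      ring
    rw [hweq, hexp]
    have h1 : (fun i => lamStar i + t * lamStar i) = lamStar + t • lamStar := rfl
    rw [h1]
    simp only [mulVec_add, mulVec_smul, dotProduct_add, add_dotProduct,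
      dotProduct_smul, smul_dotProduct, smul_eq_mul, hker1, hker2]
    ring
  -- bound lamHat M lamHat ≤ 2Q
  have hMhat_diff : lamHat ⬝ᵥ M.mulVec lamHat ≤ lamHat ⬝ᵥ Mhat.mulVec lamHat + Q := by
    have h := quad_le_of_entries_le (M - Mhat) Q
      (fun i j => le_trans (le_abs_self _) (hQ i j)) lamHat hhat0 hhat1
    rw [sub_mulVec, dotProduct_sub] at h
    linarith
  have hstar_diff : lamStar ⬝ᵥ Mhat.mulVec lamStar ≤ Q := by
    have h := quad_le_of_entries_le (Mhat - M) Q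
      (fun i j => by
        have := hQ i j
        have h2 := neg_abs_le (M i j - Mhat i j)
        simp only [Matrix.sub_apply]
        linarith) lamStar hstar0 hstar1
    rw [sub_mulVec, dotProduct_sub] at h
    have h0 : lamStar ⬝ᵥ M.mulVec lamStar = 0 := hker1 lamStar
    linarith
  have hkey : lamHat ⬝ᵥ M.mulVec lamHat ≤ 2 * Q := by
    have h1 := hmin lamStar hstar0 hstar1
    linarith
  -- spectral gap
  have hgapw := hgap w hworth
  rw [hwMw] at hgapw
  have hw2 : ∑ i, w i ^ 2 ≤ 2 * Q / α₂ := by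
    rw [le_div_iff₀ hα, mul_comm]
    linarith
  -- decomposition of norm
  have hdecomp : ∑ i, v i ^ 2 = t ^ 2 * s + ∑ i, w i ^ 2 := by
    have hvi : ∀ i, v i = t * lamStar i + w i := fun i => by simp [hw]
    calc ∑ i, v i ^ 2 = ∑ i, (t ^ 2 * lamStar i ^ 2 + 2 * t * (w i * lamStar i) + w i ^ 2) := by
          refine Finset.sum_congr rfl fun i _ => ?_
          rw [hvi i]; ring
      _ = t ^ 2 * s + 2 * t * (w ⬝ᵥ lamStar) + ∑ i, w i ^ 2 := by
          rw [Finset.sum_add_distrib, Finset.sum_add_distrib, ← Finset.mul_sum,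
            ← Finset.mul_sum, hsdef, dotProduct]
      _ = t ^ 2 * s + ∑ i, w i ^ 2 := by rw [hworth]; ring
  -- bound t² ≤ m * ∑ w²
  have hteq : t = -∑ i, w i := by
    have h1 : ∑ i, v i = t * (∑ i, lamStar i) + ∑ i, w i := by
      rw [Finset.mul_sum, ← Finset.sum_add_distrib]
      exact Finset.sum_congr rfl fun i _ => by simp [hw]
    rw [hstar1, mul_one, hsumv] at h1
    linarith
  have ht2 : t ^ 2 ≤ m * ∑ i, w i ^ 2 := by
    have hcs := sq_sum_le_card_mul_sum_sq (s := Finset.univ) (f := w)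
    simp only [Finset.card_univ, Fintype.card_fin] at hcs
    rw [hteq, neg_pow]
    simpa using hcs
  -- put it together
  have hwsq_nonneg : 0 ≤ ∑ i, w i ^ 2 := Finset.sum_nonneg fun i _ => sq_nonneg _
  have hfinal : ∑ i, v i ^ 2 ≤ (m + 1) * (2 * Q / α₂) := by
    rw [hdecomp]
    have h1 : t ^ 2 * s ≤ m * ∑ i, w i ^ 2 := by
      calc t ^ 2 * s ≤ t ^ 2 * 1 := by
            exact mul_le_mul_of_nonneg_left hs1 (sq_nonneg t)
        _ = t ^ 2 := mul_one _
        _ ≤ m * ∑ i, w i ^ 2 := ht2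
    have hmnn : (0 : ℝ) ≤ m := Nat.cast_nonneg m
    nlinarith [hw2]
  refine le_trans hfinal ?_
  have hm1 : (1 : ℝ) ≤ m := by exact_mod_cast hm
  have hm2 : (1 : ℝ) ≤ (m : ℝ) ^ 2 := by nlinarith
  have h3 : (m : ℝ) ≤ (m : ℝ) ^ 3 := by nlinarith
  rw [show ((m : ℝ) + 1) * (2 * Q / α₂) = ((m + 1) * (2 * Q)) / α₂ by ring,
    div_le_div_iff₀ hα hα]
  have h4 : (m : ℝ) + 1 ≤ 4 * (m : ℝ) ^ 3 := by linarith
  have h5 : ((m : ℝ) + 1) * (2 * Q) ≤ 4 * (m : ℝ) ^ 3 * (2 * Q) :=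
    mul_le_mul_of_nonneg_right h4 (by linarith)
  have h6 : ((m : ℝ) + 1) * (2 * Q) ≤ 8 * (m : ℝ) ^ 3 * Q := by linarith
  exact mul_le_mul_of_nonneg_right h6 hα.le
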